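/- For integers m, n ≥ 2, the complete bipartite graph K_{m,n} satisfies ζ_{K_{m,n}}(u)^{-1} = (1 − u²)^{mn−m−n} · [ ((m−1)u² + 1)^n · ((n−1)u² + 1)^m − m·n·u² · ((m−1)u² + 1)^{n−1} · ((n−1)u² + 1)^{m−1} ] in ℤ[u]. -/

import Mathlib

open Polynomial Matrix

/-- The reciprocal of the Ihara zeta function of a finite simple graph `G`, as a polynomial
in `ℤ[u]`: `(1 - u²)^(r-1) * det(I - A·u + Q·u²)`, where `A` is the adjacency matrix,
`Q = D - I` with `D` the degree matrix, and `r - 1 = |E| - |V|`. -/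
noncomputable def iharaZetaInv {V : Type} [Fintype V] [DecidableEq V]
    (G : SimpleGraph V) [DecidableRel G.Adj] : Polynomial ℤ :=
  (1 - X ^ 2) ^ (G.edgeFinset.card - Fintype.card V) *
    ((1 : Matrix V V (Polynomial ℤ)) - (X : Polynomial ℤ) • G.adjMatrix (Polynomial ℤ) +
      (X ^ 2 : Polynomial ℤ) • Matrix.diagonal (fun v => (G.degree v : Polynomial ℤ) - 1)).det

noncomputable instance (m n : ℕ) :
    DecidableRel (completeBipartiteGraph (Fin m) (Fin n)).Adj :=
  Classical.decRel _


lemma deg_inl (m n : ℕ) (i : Fin m) :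
    (completeBipartiteGraph (Fin m) (Fin n)).degree (Sum.inl i) = n := by
  have h : (completeBipartiteGraph (Fin m) (Fin n)).neighborFinset (Sum.inl i) =
      Finset.univ.map ⟨Sum.inr, Sum.inr_injective⟩ := by
    ext w
    cases w <;> simp [SimpleGraph.mem_neighborFinset]
  show ((completeBipartiteGraph (Fin m) (Fin n)).neighborFinset (Sum.inl i)).card = n
  rw [h, Finset.card_map, Finset.card_univ, Fintype.card_fin]

lemma deg_inr (m n : ℕ) (j : Fin n) :
    (completeBipartiteGraph (Fin m) (Fin n)).degree (Sum.inr j) = m := by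
  have h : (completeBipartiteGraph (Fin m) (Fin n)).neighborFinset (Sum.inr j) =
      Finset.univ.map ⟨Sum.inl, Sum.inl_injective⟩ := by
    ext w
    cases w <;> simp [SimpleGraph.mem_neighborFinset]
  show ((completeBipartiteGraph (Fin m) (Fin n)).neighborFinset (Sum.inr j)).card = m
  rw [h, Finset.card_map, Finset.card_univ, Fintype.card_fin]

lemma card_edges (m n : ℕ) :
    (completeBipartiteGraph (Fin m) (Fin n)).edgeFinset.card = m * n := by
  have h := (completeBipartiteGraph (Fin m) (Fin n)).sum_degrees_eq_twice_card_edges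
  rw [Fintype.sum_sum_type] at h
  simp only [deg_inl, deg_inr, Finset.sum_const, Finset.card_univ, Fintype.card_fin,
    smul_eq_mul] at h
  have h2 : n * m = m * n := Nat.mul_comm n m
  omega

lemma matrix_eq (m n : ℕ) :
    ((1 : Matrix (Fin m ⊕ Fin n) (Fin m ⊕ Fin n) (Polynomial ℤ)) -
      (X : Polynomial ℤ) • (completeBipartiteGraph (Fin m) (Fin n)).adjMatrix (Polynomial ℤ) +
      (X ^ 2 : Polynomial ℤ) • Matrix.diagonal
        (fun v => ((completeBipartiteGraph (Fin m) (Fin n)).degree v : Polynomial ℤ) - 1)) =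
    Matrix.fromBlocks
      ((C ((n : ℤ) - 1) * X ^ 2 + 1) • (1 : Matrix (Fin m) (Fin m) (Polynomial ℤ)))
      (Matrix.of fun _ _ => -X) (Matrix.of fun _ _ => -X)
      ((C ((m : ℤ) - 1) * X ^ 2 + 1) • (1 : Matrix (Fin n) (Fin n) (Polynomial ℤ))) := by
  refine Matrix.ext fun i j => ?_
  cases i <;> cases j <;>
    simp [Matrix.one_apply, Matrix.diagonal_apply, deg_inl, deg_inr, Matrix.smul_apply,
      smul_eq_mul, sub_mul, C_eq_intCast] <;>
    split <;> push_cast <;> ring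


lemma det_block_aux {F : Type*} [Field F] (m n : ℕ) (a b c : F) (ha : a ≠ 0) (hb : b ≠ 0) :
    (Matrix.fromBlocks (a • (1 : Matrix (Fin (m+1)) (Fin (m+1)) F))
      (Matrix.of fun _ _ => c) (Matrix.of fun _ _ => c)
      (b • (1 : Matrix (Fin (n+1)) (Fin (n+1)) F))).det
    = a ^ m * b ^ n * (a * b - (m+1) * (n+1) * c^2) := by
  letI : Invertible (b • (1 : Matrix (Fin (n+1)) (Fin (n+1)) F)) :=
    ⟨b⁻¹ • 1, by rw [smul_mul_smul_comm, inv_mul_cancel₀ hb, one_mul, one_smul],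
      by rw [smul_mul_smul_comm, mul_inv_cancel₀ hb, one_mul, one_smul]⟩
  rw [Matrix.det_fromBlocks₂₂]
  have hinv : ⅟(b • (1 : Matrix (Fin (n+1)) (Fin (n+1)) F)) = b⁻¹ • 1 := rfl
  have hschur : (a • (1 : Matrix (Fin (m+1)) (Fin (m+1)) F)) -
      (Matrix.of fun _ _ => c : Matrix (Fin (m+1)) (Fin (n+1)) F) *
        ⅟(b • (1 : Matrix (Fin (n+1)) (Fin (n+1)) F)) *
        (Matrix.of fun _ _ => c : Matrix (Fin (n+1)) (Fin (m+1)) F) =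
      a • ((1 : Matrix (Fin (m+1)) (Fin (m+1)) F) +
        Matrix.replicateCol Unit (fun _ : Fin (m+1) => -((n+1) * c^2 * b⁻¹ * a⁻¹)) *
        Matrix.replicateRow Unit (fun _ : Fin (m+1) => (1:F))) := by
    rw [hinv]
    ext i j
    simp only [Matrix.sub_apply, Matrix.smul_apply, Matrix.add_apply, Matrix.mul_apply,
      Matrix.one_apply, Matrix.of_apply, Matrix.replicateCol_apply, Matrix.replicateRow_apply,
      Finset.univ_unique, Finset.sum_singleton, smul_eq_mul]
    rcases eq_or_ne i j with rfl | h
    · simp [Finset.mul_sum, Finset.sum_ite_eq]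
      field_simp
      ring
    · simp [h, Finset.mul_sum, Finset.sum_ite_eq]
      field_simp
  rw [hschur, Matrix.det_smul, Matrix.det_smul, Matrix.det_one_add_replicateCol_mul_replicateRow,
    Matrix.det_one]
  simp [dotProduct, Finset.sum_const]
  field_simp
  ring


lemma poly_ne (a : ℤ) : C a * X ^ 2 + 1 ≠ (0 : Polynomial ℤ) := fun h => by
  simpa using congrArg (Polynomial.eval 0) h

lemma det_cbp (m n : ℕ) (hm : 1 ≤ m) (hn : 1 ≤ n) :
    (Matrix.fromBlocks
      ((C ((n : ℤ) - 1) * X ^ 2 + 1) • (1 : Matrix (Fin m) (Fin m) (Polynomial ℤ)))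
      (Matrix.of fun _ _ => -X) (Matrix.of fun _ _ => -X)
      ((C ((m : ℤ) - 1) * X ^ 2 + 1) • (1 : Matrix (Fin n) (Fin n) (Polynomial ℤ)))).det =
    (C ((m : ℤ) - 1) * X ^ 2 + 1) ^ n * (C ((n : ℤ) - 1) * X ^ 2 + 1) ^ m -
      C ((m : ℤ) * (n : ℤ)) * X ^ 2 *
        (C ((m : ℤ) - 1) * X ^ 2 + 1) ^ (n - 1) *
        (C ((n : ℤ) - 1) * X ^ 2 + 1) ^ (m - 1) := by
  obtain ⟨m, rfl⟩ : ∃ m', m = m' + 1 := ⟨m - 1, by omega⟩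
  obtain ⟨n, rfl⟩ : ∃ n', n = n' + 1 := ⟨n - 1, by omega⟩
  set F := FractionRing (Polynomial ℤ)
  set φ := algebraMap (Polynomial ℤ) F with hφ
  apply IsFractionRing.injective (Polynomial ℤ) F
  rw [RingHom.map_det, RingHom.mapMatrix_apply]
  have hmap : ∀ (k : ℕ) (p : Polynomial ℤ),
      ((p • (1 : Matrix (Fin k) (Fin k) (Polynomial ℤ))).map φ) = φ p • 1 := by
    intro k p
    refine Matrix.ext fun i j => ?_
    simp [Matrix.one_apply, apply_ite φ]
  rw [Matrix.fromBlocks_map, hmap, hmap]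
  have hof : ∀ (k l : ℕ), ((Matrix.of fun _ _ => -X : Matrix (Fin k) (Fin l) (Polynomial ℤ)).map φ)
      = Matrix.of fun _ _ => φ (-X) := fun _ _ => rfl
  rw [hof, hof]
  rw [det_block_aux _ _ _ _ _
    ((map_ne_zero_iff φ (IsFractionRing.injective _ _)).mpr (poly_ne _))
    ((map_ne_zero_iff φ (IsFractionRing.injective _ _)).mpr (poly_ne _))]
  have hC : ∀ z : ℤ, φ (C z) = (z : F) := fun z => by
    rw [hφ]; simp [Polynomial.C_eq_intCast]
  simp only [← hφ]
  simp only [Nat.add_sub_cancel, _root_.map_sub, _root_.map_mul, _root_.map_add,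
    _root_.map_pow, _root_.map_one, _root_.map_neg, hC]
  push_cast
  ring

/-- For `m, n ≥ 2`, the Ihara zeta function of the complete bipartite graph `K_{m,n}`. -/
theorem iharaZetaInv_completeBipartiteGraph (m n : ℕ) (hm : 2 ≤ m) (hn : 2 ≤ n) :
    iharaZetaInv (completeBipartiteGraph (Fin m) (Fin n)) =
      (1 - X ^ 2) ^ (m * n - m - n) *
        ((C ((m : ℤ) - 1) * X ^ 2 + 1) ^ n * (C ((n : ℤ) - 1) * X ^ 2 + 1) ^ m -
          C ((m : ℤ) * (n : ℤ)) * X ^ 2 *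
            (C ((m : ℤ) - 1) * X ^ 2 + 1) ^ (n - 1) *
            (C ((n : ℤ) - 1) * X ^ 2 + 1) ^ (m - 1)) := by
  unfold iharaZetaInv
  have hcard : Fintype.card (Fin m ⊕ Fin n) = m + n := by simp
  rw [card_edges, hcard, matrix_eq, det_cbp m n (by omega) (by omega), ← Nat.sub_sub]
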